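/- (Theorem 2.5 (iii), pointwise form) Assume G is conserved by X. If a differentiable curve x on an interval solves the geometrically dissipated system and x(t₀) ∉ Inv for some t₀ in that interval, then the derivative of G∘x at t₀ is strictly negative. -/

import Mathlib

open scoped RealInnerProductSpace BigOperators
open Filter Topology

/-- `Σ^{(a₁,…,a_r)}_{(b₁,…,b_s)}`: the `r × s` real matrix whose `(i,j)` entry is `⟪b j, a i⟫`. -/
noncomputable def sigmaMat {E : Type*} [NormedAddCommGroup E] [InnerProductSpace ℝ E]
    {r s : ℕ} (a : Fin r → E) (b : Fin s → E) : Matrix (Fin r) (Fin s) ℝ :=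
  Matrix.of fun i j => ⟪b j, a i⟫

/-- The standard control vector `v₀(w₁,…,w_{k+1},u)`: there are `k+1` vectors `w`
(`k+1 ≥ 1` encodes the requirement that the number of `w`-vectors is at least one).
With `0`-indexing, the sign `(-1)^(i+k+1)` below is the paper's `(-1)^{i+k+1}` for
`1`-indexed `i` and `k+1` vectors. -/
noncomputable def stdControl {E : Type*} [NormedAddCommGroup E] [InnerProductSpace ℝ E]
    {k : ℕ} (w : Fin (k + 1) → E) (u : E) : E :=
  (∑ i : Fin (k + 1),
      ((-1 : ℝ) ^ ((i : ℕ) + k + 1) *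
        (sigmaMat w (Fin.snoc (w ∘ i.succAbove) u)).det) • w i) +
    (sigmaMat w w).det • u

/-- The family of gradients `(∇F₁(x),…,∇F_{k+1}(x),∇G(x))`. -/
noncomputable def gradFam {E : Type*} [NormedAddCommGroup E] [InnerProductSpace ℝ E]
    [FiniteDimensional ℝ E] {k : ℕ} (F : Fin (k + 1) → E → ℝ) (G : E → ℝ) (x : E) :
    Fin (k + 1 + 1) → E :=
  Fin.snoc (fun i => gradient (F i) x) (gradient G x)

/-- The standard control vector field `x ↦ v₀(∇F₁(x),…,∇F_{k+1}(x),∇G(x))`. -/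
noncomputable def v0Field {E : Type*} [NormedAddCommGroup E] [InnerProductSpace ℝ E]
    [FiniteDimensional ℝ E] {k : ℕ} (F : Fin (k + 1) → E → ℝ) (G : E → ℝ) (x : E) : E :=
  stdControl (fun i => gradient (F i) x) (gradient G x)

/-- `det Σ^{(∇F₁(x),…,∇F_{k+1}(x),∇G(x))}_{(∇F₁(x),…,∇F_{k+1}(x),∇G(x))}`. -/
noncomputable def gramDetFG {E : Type*} [NormedAddCommGroup E] [InnerProductSpace ℝ E]
    [FiniteDimensional ℝ E] {k : ℕ} (F : Fin (k + 1) → E → ℝ) (G : E → ℝ) (x : E) : ℝ :=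
  (sigmaMat (gradFam F G x) (gradFam F G x)).det

/-- The set `Inv = {x | det Σ^{(∇F(x),∇G(x))}_{(∇F(x),∇G(x))} = 0}`. -/
def invSet {E : Type*} [NormedAddCommGroup E] [InnerProductSpace ℝ E]
    [FiniteDimensional ℝ E] {k : ℕ} (F : Fin (k + 1) → E → ℝ) (G : E → ℝ) : Set E :=
  {x | gramDetFG F G x = 0}

lemma gram_det_nonneg {E : Type*} [NormedAddCommGroup E] [InnerProductSpace ℝ E]
    [FiniteDimensional ℝ E] {n : ℕ} (v : Fin n → E) : 0 ≤ (sigmaMat v v).det := by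
  set d := Module.finrank ℝ E
  let b : OrthonormalBasis (Fin d) ℝ E := stdOrthonormalBasis ℝ E
  let A : Matrix (Fin d) (Fin n) ℝ := Matrix.of fun p j => b.repr (v j) p
  have hAA : sigmaMat v v = A.conjTranspose * A := by
    ext i j
    have : ⟪v i, v j⟫ = ⟪b.repr (v i), b.repr (v j)⟫ := (b.repr.inner_map_map _ _).symm
    simp only [sigmaMat, Matrix.of_apply, Matrix.mul_apply, Matrix.conjTranspose_apply,
      star_trivial]
    rw [real_inner_comm, this, PiLp.inner_apply]
    simp [A, RCLike.inner_apply, mul_comm]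
  have hps : (sigmaMat v v).PosSemidef := hAA ▸ Matrix.posSemidef_conjTranspose_mul_self A
  rw [hps.1.det_eq_prod_eigenvalues]
  exact Finset.prod_nonneg fun i _ => hps.eigenvalues_nonneg i

lemma inner_stdControl {E : Type*} [NormedAddCommGroup E] [InnerProductSpace ℝ E]
    {k : ℕ} (w : Fin (k + 1) → E) (u : E) :
    ⟪u, stdControl w u⟫ = (sigmaMat (Fin.snoc w u) (Fin.snoc w u)).det := by
  set v : Fin (k + 2) → E := Fin.snoc w u with hv
  rw [Matrix.det_succ_column (sigmaMat v v) (Fin.last (k + 1))]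
  rw [Fin.sum_univ_castSucc]
  simp only [stdControl, inner_add_right, inner_sum, real_inner_smul_right]
  congr 1
  · refine Finset.sum_congr rfl fun i _ => ?_
    have hmin : ((sigmaMat v v).submatrix (Fin.castSucc i).succAbove
        (Fin.last (k + 1)).succAbove) = (sigmaMat w (Fin.snoc (w ∘ i.succAbove) u)).transpose := by
      ext r c
      have hvr : v ((Fin.castSucc i).succAbove r) = (Fin.snoc (w ∘ i.succAbove) u : Fin (k+1) → E) r := by
        refine Fin.lastCases ?_ (fun r' => ?_) r
        · rw [Fin.succAbove_of_le_castSucc _ _ (by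
            exact Fin.castSucc_le_castSucc_iff.2 (Fin.le_last i)), Fin.succ_last]
          simp [hv]
        · rw [Fin.castSucc_succAbove_castSucc]
          simp [hv]
      simp only [Matrix.submatrix_apply, Matrix.transpose_apply, sigmaMat, Matrix.of_apply,
        Fin.succAbove_last]
      rw [hvr, hv, Fin.snoc_castSucc, real_inner_comm]
    have h1 : v (Fin.castSucc i) = w i := by simp [hv]
    have h2 : v (Fin.last (k + 1)) = u := by simp [hv]
    rw [hmin, Matrix.det_transpose]
    simp only [sigmaMat, Matrix.of_apply, h1, h2, Fin.coe_castSucc, Fin.val_last]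
    ring
  · have hmin : ((sigmaMat v v).submatrix (Fin.last (k + 1)).succAbove
        (Fin.last (k + 1)).succAbove) = sigmaMat w w := by
      ext r c
      simp only [Matrix.submatrix_apply, sigmaMat, Matrix.of_apply, Fin.succAbove_last]
      rw [hv, Fin.snoc_castSucc, Fin.snoc_castSucc]
    have h2 : v (Fin.last (k + 1)) = u := by simp [hv]
    rw [hmin]
    simp only [sigmaMat, Matrix.of_apply, Fin.val_last, h2]
    have hsgn : ((-1 : ℝ)) ^ (k + 1 + (k + 1)) = 1 := by
      rw [← two_mul, pow_mul]; norm_num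
    rw [hsgn]; ring

/-- Theorem 2.5 (iii), pointwise form: along a solution of the geometrically
dissipated system, at any time where the solution is outside `Inv` the derivative of
`G ∘ x` is strictly negative. -/
theorem deriv_G_comp_neg_of_not_mem_inv
    {E : Type*} [NormedAddCommGroup E] [InnerProductSpace ℝ E]
    [FiniteDimensional ℝ E] {k : ℕ} (F : Fin (k + 1) → E → ℝ) (G : E → ℝ) (X : E → E)
    (hF : ∀ i, ContDiff ℝ 1 (F i)) (hG : ContDiff ℝ 1 G)
    (hcons : ∀ y : E, ⟪gradient G y, X y⟫ = 0)
    (I : Set ℝ) (hI : I.OrdConnected) (x : ℝ → E)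
    (hx : ∀ t ∈ I, HasDerivAt x (X (x t) - v0Field F G (x t)) t)
    (t₀ : ℝ) (ht₀ : t₀ ∈ I) (hnot : x t₀ ∉ invSet F G) :
    deriv (fun s => G (x s)) t₀ < 0 := by
  have hG' : HasFDerivAt G ((InnerProductSpace.toDualMap ℝ E) (gradient G (x t₀))) (x t₀) :=
    hasGradientAt_iff_hasFDerivAt.mp ((hG.differentiable one_ne_zero) (x t₀)).hasGradientAt
  have hcomp : HasDerivAt (fun s => G (x s))
      (⟪gradient G (x t₀), X (x t₀) - v0Field F G (x t₀)⟫) t₀ := by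
    have := hG'.comp_hasDerivAt t₀ (hx t₀ ht₀)
    exact this
  rw [hcomp.deriv, inner_sub_right, hcons]
  have key : ⟪gradient G (x t₀), v0Field F G (x t₀)⟫ = gramDetFG F G (x t₀) :=
    inner_stdControl (fun i => gradient (F i) (x t₀)) (gradient G (x t₀))
  rw [key]
  have h0 : gramDetFG F G (x t₀) ≠ 0 := fun h => hnot h
  have h1 : 0 ≤ gramDetFG F G (x t₀) :=
    gram_det_nonneg (gradFam F G (x t₀))
  have := lt_of_le_of_ne h1 (Ne.symm h0)
  linarith
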